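/- Let F₂(p₁,p₂) = σ₁Ω(p₁) + σ₂Ω(p₂) + σ₁₂Ω(p₁+p₂) on ℝ⁶, with σ₁,σ₂,σ₁₂ ∈ {±1} and Ω the Bogoliubov dispersion with D²Ω = I + λA, ‖A‖_∞ ≤ CM². Let T be the 6×6 block matrix ((σ₁+σ₁₂)I, σ₁₂I; σ₁₂I, (σ₂+σ₁₂)I). Then: (i) ∇F₂(0,0) = 0; (ii) det(T) = σ₁₂(σ₁₂σ₁σ₂+σ₁+σ₂)³ ≠ 0; (iii) for all λ > 0 small enough (depending on M), and for all k₂, p₂ ∈ ℝ⁶, |D²F₂(k₂)·p₂| ∈ [|T p₂|/2, 3|T p₂|/2]. -/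

import Mathlib

open Kronecker in
private lemma det_aux (a b c : ℝ) :
    (Matrix.of fun i j : Fin 6 =>
        (if (i : ℕ) < 3 then (if (j : ℕ) < 3 then a else b)
          else (if (j : ℕ) < 3 then b else c))
          * (if (i : ℕ) % 3 = (j : ℕ) % 3 then (1 : ℝ) else 0)).det
      = (a * c - b ^ 2) ^ 3 := by
  have hM : (Matrix.of fun i j : Fin 6 =>
        (if (i : ℕ) < 3 then (if (j : ℕ) < 3 then a else b)
          else (if (j : ℕ) < 3 then b else c))
          * (if (i : ℕ) % 3 = (j : ℕ) % 3 then (1 : ℝ) else 0))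
      = ((!![a, b; b, c]) ⊗ₖ (1 : Matrix (Fin 3) (Fin 3) ℝ)).submatrix
          finProdFinEquiv.symm finProdFinEquiv.symm := by
    ext i j
    fin_cases i <;> fin_cases j <;>
      simp [finProdFinEquiv, Matrix.one_apply, Fin.divNat, Fin.modNat,
        Fin.ext_iff] <;> rfl
  rw [hM, Matrix.det_submatrix_equiv_self, Matrix.det_kronecker,
    Matrix.det_fin_two_of, Matrix.det_one]
  simp
  ring

private lemma sum_le_two_sqrt (x y : ℝ) (hx : 0 ≤ x) (hy : 0 ≤ y) :
    x + y ≤ 2 * Real.sqrt (x ^ 2 + y ^ 2) := by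
  have h0 : 0 ≤ Real.sqrt (x ^ 2 + y ^ 2) := Real.sqrt_nonneg _
  have h2 : (Real.sqrt (x ^ 2 + y ^ 2)) ^ 2 = x ^ 2 + y ^ 2 :=
    Real.sq_sqrt (by positivity)
  nlinarith [sq_nonneg (x - y), sq_nonneg (x + y - 2 * Real.sqrt (x ^ 2 + y ^ 2))]


set_option maxHeartbeats 1000000 in
/-- For `F₂(p₁,p₂) = σ₁Ω(p₁) + σ₂Ω(p₂) + σ₁₂Ω(p₁+p₂)` with
`σ's ∈ {±1}` and `Ω` the Bogoliubov dispersion with `∇Ω(p) = (1+λε(p))p`,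
`D²Ω = I + λA`, `‖ε‖_∞, ‖A‖_∞ ≤ C_A` (the constant `C·M²` of the previous lemma):
(i) `∇F₂(0,0) = 0`; (ii) the block matrix `T` has determinant
`σ₁₂(σ₁₂σ₁σ₂+σ₁+σ₂)³ ≠ 0`; (iii) for λ small enough (depending on the bound `C_A`),
`|D²F₂(k₂)p₂| ∈ [|Tp₂|/2, 3|Tp₂|/2]` for all `k₂, p₂ ∈ ℝ⁶`, where the Hessian of `F₂`
acts blockwise through `H(q) = I + λA(q)`. -/
theorem stmt_11 :
    ∀ CA : ℝ, 0 < CA → ∃ lam₀ : ℝ, 0 < lam₀ ∧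
      ∀ lam : ℝ, 0 < lam → lam < lam₀ →
        ∀ (Ω ε : EuclideanSpace ℝ (Fin 3) → ℝ)
          (A : EuclideanSpace ℝ (Fin 3) →
            (EuclideanSpace ℝ (Fin 3) →L[ℝ] EuclideanSpace ℝ (Fin 3)))
          (σ₁ σ₂ σ₁₂ : ℝ),
          (σ₁ = 1 ∨ σ₁ = -1) → (σ₂ = 1 ∨ σ₂ = -1) → (σ₁₂ = 1 ∨ σ₁₂ = -1) →
          Differentiable ℝ Ω →
          (∀ p, gradient Ω p = (1 + lam * ε p) • p) →
          (∀ p, |ε p| ≤ CA) →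
          (∀ p, fderiv ℝ (gradient Ω) p
              = ContinuousLinearMap.id ℝ (EuclideanSpace ℝ (Fin 3)) + lam • A p) →
          (∀ p, ‖A p‖ ≤ CA) →
          -- (i)  ∇F₂(0,0) = 0
          (fderiv ℝ
              (fun q : EuclideanSpace ℝ (Fin 3) × EuclideanSpace ℝ (Fin 3) =>
                σ₁ * Ω q.1 + σ₂ * Ω q.2 + σ₁₂ * Ω (q.1 + q.2)) (0, 0) = 0) ∧
          -- (ii)  det T = σ₁₂(σ₁₂σ₁σ₂+σ₁+σ₂)³ ≠ 0
          ((Matrix.of fun i j : Fin 6 =>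
              (if (i : ℕ) < 3 then (if (j : ℕ) < 3 then σ₁ + σ₁₂ else σ₁₂)
                else (if (j : ℕ) < 3 then σ₁₂ else σ₂ + σ₁₂))
                * (if (i : ℕ) % 3 = (j : ℕ) % 3 then (1 : ℝ) else 0)).det
              = σ₁₂ * (σ₁₂ * σ₁ * σ₂ + σ₁ + σ₂) ^ 3 ∧
            σ₁₂ * (σ₁₂ * σ₁ * σ₂ + σ₁ + σ₂) ^ 3 ≠ 0) ∧
          -- (iii)  |D²F₂(k₂)p₂| ∈ [|Tp₂|/2, 3|Tp₂|/2]
          (∀ k₁ k₂ p₁ p₂ : EuclideanSpace ℝ (Fin 3),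
            let Hq : EuclideanSpace ℝ (Fin 3) → EuclideanSpace ℝ (Fin 3) →
                EuclideanSpace ℝ (Fin 3) := fun q x => x + lam • A q x
            let row1 := σ₁ • Hq k₁ p₁ + σ₁₂ • Hq (k₁ + k₂) (p₁ + p₂)
            let row2 := σ₂ • Hq k₂ p₂ + σ₁₂ • Hq (k₁ + k₂) (p₁ + p₂)
            let T1 := (σ₁ + σ₁₂) • p₁ + σ₁₂ • p₂
            let T2 := σ₁₂ • p₁ + (σ₂ + σ₁₂) • p₂
            Real.sqrt (‖T1‖ ^ 2 + ‖T2‖ ^ 2) / 2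
                ≤ Real.sqrt (‖row1‖ ^ 2 + ‖row2‖ ^ 2) ∧
              Real.sqrt (‖row1‖ ^ 2 + ‖row2‖ ^ 2)
                ≤ 3 * Real.sqrt (‖T1‖ ^ 2 + ‖T2‖ ^ 2) / 2) := by
  intro CA hCA
  refine ⟨1 / (48 * CA), by positivity, ?_⟩
  intro lam hlam hlam' Ω ε A σ₁ σ₂ σ₁₂ hσ₁ hσ₂ hσ₁₂ hdiff hgrad hε hfd hA
  have habs₁ : |σ₁| = 1 := by rcases hσ₁ with h | h <;> rw [h] <;> norm_num
  have habs₂ : |σ₂| = 1 := by rcases hσ₂ with h | h <;> rw [h] <;> norm_num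
  have habs₁₂ : |σ₁₂| = 1 := by rcases hσ₁₂ with h | h <;> rw [h] <;> norm_num
  refine ⟨?_, ⟨?_, ?_⟩, ?_⟩
  · -- (i)
    have hg0 : gradient Ω 0 = 0 := by rw [hgrad]; simp
    have hf0 : fderiv ℝ Ω (0 : EuclideanSpace ℝ (Fin 3)) = 0 := by
      unfold gradient at hg0
      have := congrArg (InnerProductSpace.toDual ℝ (EuclideanSpace ℝ (Fin 3))) hg0
      simpa using this
    have hΩ0 : HasFDerivAt Ω (0 : EuclideanSpace ℝ (Fin 3) →L[ℝ] ℝ) 0 :=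
      hf0 ▸ (hdiff 0).hasFDerivAt
    have h1 : HasFDerivAt
        (fun q : EuclideanSpace ℝ (Fin 3) × EuclideanSpace ℝ (Fin 3) => σ₁ * Ω q.1)
        (0 : (EuclideanSpace ℝ (Fin 3) × EuclideanSpace ℝ (Fin 3)) →L[ℝ] ℝ) (0, 0) := by
      have := (hΩ0.comp ((0, 0) : EuclideanSpace ℝ (Fin 3) × EuclideanSpace ℝ (Fin 3))
        (hasFDerivAt_fst (𝕜 := ℝ) (E := EuclideanSpace ℝ (Fin 3)) (F := EuclideanSpace ℝ (Fin 3)) (p := (0, 0)))).const_mul σ₁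
      simpa using this
    have h2 : HasFDerivAt
        (fun q : EuclideanSpace ℝ (Fin 3) × EuclideanSpace ℝ (Fin 3) => σ₂ * Ω q.2)
        (0 : (EuclideanSpace ℝ (Fin 3) × EuclideanSpace ℝ (Fin 3)) →L[ℝ] ℝ) (0, 0) := by
      have := (hΩ0.comp ((0, 0) : EuclideanSpace ℝ (Fin 3) × EuclideanSpace ℝ (Fin 3))
        (hasFDerivAt_snd (𝕜 := ℝ) (E := EuclideanSpace ℝ (Fin 3)) (F := EuclideanSpace ℝ (Fin 3)) (p := (0, 0)))).const_mul σ₂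
      simpa using this
    have hΩ0' : HasFDerivAt Ω (0 : EuclideanSpace ℝ (Fin 3) →L[ℝ] ℝ)
        (((0, 0) : EuclideanSpace ℝ (Fin 3) × EuclideanSpace ℝ (Fin 3)).1
          + ((0, 0) : EuclideanSpace ℝ (Fin 3) × EuclideanSpace ℝ (Fin 3)).2) := by
      simpa using hΩ0
    have h3 : HasFDerivAt
        (fun q : EuclideanSpace ℝ (Fin 3) × EuclideanSpace ℝ (Fin 3) => σ₁₂ * Ω (q.1 + q.2))
        (0 : (EuclideanSpace ℝ (Fin 3) × EuclideanSpace ℝ (Fin 3)) →L[ℝ] ℝ) (0, 0) := by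
      have := (hΩ0'.comp ((0, 0) : EuclideanSpace ℝ (Fin 3) × EuclideanSpace ℝ (Fin 3))
        (hasFDerivAt_fst.add hasFDerivAt_snd)).const_mul σ₁₂
      simpa using this
    have h := (h1.add h2).add h3
    simp only [add_zero] at h
    exact h.fderiv
  · -- (ii) determinant value
    rw [det_aux]
    rcases hσ₁ with h | h <;> rcases hσ₂ with h' | h' <;> rcases hσ₁₂ with h'' | h'' <;>
      rw [h, h', h''] <;> norm_num
  · -- (ii) nonzero
    rcases hσ₁ with h | h <;> rcases hσ₂ with h' | h' <;> rcases hσ₁₂ with h'' | h'' <;>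
      rw [h, h', h''] <;> norm_num
  · -- (iii)
    intro k₁ k₂ p₁ p₂ Hq row1 row2 T1 T2
    have hAle : ∀ q x, ‖A q x‖ ≤ CA * ‖x‖ := fun q x =>
      ((A q).le_opNorm x).trans (mul_le_mul_of_nonneg_right (hA q) (norm_nonneg x))
    set t1 := ‖T1‖ with ht1
    set t2 := ‖T2‖ with ht2
    set r1 := ‖row1‖ with hr1
    set r2 := ‖row2‖ with hr2
    set S := Real.sqrt (t1 ^ 2 + t2 ^ 2) with hS
    set R := Real.sqrt (r1 ^ 2 + r2 ^ 2) with hR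
    have hS0 : 0 ≤ S := Real.sqrt_nonneg _
    have hR0 : 0 ≤ R := Real.sqrt_nonneg _
    have hS2 : S ^ 2 = t1 ^ 2 + t2 ^ 2 := Real.sq_sqrt (by positivity)
    have hR2 : R ^ 2 = r1 ^ 2 + r2 ^ 2 := Real.sq_sqrt (by positivity)
    have ht12 : t1 + t2 ≤ 2 * S := sum_le_two_sqrt _ _ (norm_nonneg _) (norm_nonneg _)
    have hr12 : r1 + r2 ≤ 2 * R := sum_le_two_sqrt _ _ (norm_nonneg _) (norm_nonneg _)
    -- ‖p₁‖, ‖p₂‖ bounds via invertibility of T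
    have hd1 : 1 ≤ |(σ₁ + σ₁₂) * (σ₂ + σ₁₂) - σ₁₂ * σ₁₂| := by
      rcases hσ₁ with h | h <;> rcases hσ₂ with h' | h' <;> rcases hσ₁₂ with h'' | h'' <;>
        rw [h, h', h''] <;> norm_num
    have hid1 : ((σ₁ + σ₁₂) * (σ₂ + σ₁₂) - σ₁₂ * σ₁₂) • p₁
        = (σ₂ + σ₁₂) • T1 - σ₁₂ • T2 := by
      show ((σ₁ + σ₁₂) * (σ₂ + σ₁₂) - σ₁₂ * σ₁₂) • p₁
        = (σ₂ + σ₁₂) • ((σ₁ + σ₁₂) • p₁ + σ₁₂ • p₂)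
          - σ₁₂ • (σ₁₂ • p₁ + (σ₂ + σ₁₂) • p₂)
      module
    have hid2 : ((σ₁ + σ₁₂) * (σ₂ + σ₁₂) - σ₁₂ * σ₁₂) • p₂
        = (σ₁ + σ₁₂) • T2 - σ₁₂ • T1 := by
      show ((σ₁ + σ₁₂) * (σ₂ + σ₁₂) - σ₁₂ * σ₁₂) • p₂
        = (σ₁ + σ₁₂) • (σ₁₂ • p₁ + (σ₂ + σ₁₂) • p₂)
          - σ₁₂ • ((σ₁ + σ₁₂) • p₁ + σ₁₂ • p₂)
      module
    have habs_a : |σ₁ + σ₁₂| ≤ 2 := (abs_add_le _ _).trans (by rw [habs₁, habs₁₂]; norm_num)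
    have habs_c : |σ₂ + σ₁₂| ≤ 2 := (abs_add_le _ _).trans (by rw [habs₂, habs₁₂]; norm_num)
    have hp1 : ‖p₁‖ ≤ 2 * t1 + 2 * t2 := by
      have e1 : |(σ₁ + σ₁₂) * (σ₂ + σ₁₂) - σ₁₂ * σ₁₂| * ‖p₁‖
          = ‖((σ₁ + σ₁₂) * (σ₂ + σ₁₂) - σ₁₂ * σ₁₂) • p₁‖ := by
        rw [norm_smul, Real.norm_eq_abs]
      have e2 : ‖(σ₂ + σ₁₂) • T1 - σ₁₂ • T2‖ ≤ 2 * t1 + 1 * t2 := by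
        refine (norm_sub_le _ _).trans ?_
        rw [norm_smul, norm_smul, Real.norm_eq_abs, Real.norm_eq_abs, habs₁₂]
        gcongr
      have e3 : |(σ₁ + σ₁₂) * (σ₂ + σ₁₂) - σ₁₂ * σ₁₂| * ‖p₁‖ ≤ 2 * t1 + 1 * t2 := by
        rw [e1, hid1]; exact e2
      nlinarith [norm_nonneg p₁, e3, hd1, norm_nonneg T1, norm_nonneg T2]
    have hp2 : ‖p₂‖ ≤ 2 * t1 + 2 * t2 := by
      have e1 : |(σ₁ + σ₁₂) * (σ₂ + σ₁₂) - σ₁₂ * σ₁₂| * ‖p₂‖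
          = ‖((σ₁ + σ₁₂) * (σ₂ + σ₁₂) - σ₁₂ * σ₁₂) • p₂‖ := by
        rw [norm_smul, Real.norm_eq_abs]
      have e2 : ‖(σ₁ + σ₁₂) • T2 - σ₁₂ • T1‖ ≤ 1 * t1 + 2 * t2 := by
        refine (norm_sub_le _ _).trans ?_
        rw [norm_smul, norm_smul, Real.norm_eq_abs, Real.norm_eq_abs, habs₁₂]
        rw [add_comm]
        gcongr
      have e3 : |(σ₁ + σ₁₂) * (σ₂ + σ₁₂) - σ₁₂ * σ₁₂| * ‖p₂‖ ≤ 1 * t1 + 2 * t2 := by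
        rw [e1, hid2]; exact e2
      nlinarith [norm_nonneg p₂, e3, hd1, norm_nonneg T1, norm_nonneg T2]
    -- error terms
    have hE1 : row1 - T1 = lam • (σ₁ • A k₁ p₁ + σ₁₂ • A (k₁ + k₂) (p₁ + p₂)) := by
      show (σ₁ • (p₁ + lam • A k₁ p₁) + σ₁₂ • ((p₁ + p₂) + lam • A (k₁ + k₂) (p₁ + p₂)))
          - ((σ₁ + σ₁₂) • p₁ + σ₁₂ • p₂) = _
      module
    have hE2 : row2 - T2 = lam • (σ₂ • A k₂ p₂ + σ₁₂ • A (k₁ + k₂) (p₁ + p₂)) := by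
      show (σ₂ • (p₂ + lam • A k₂ p₂) + σ₁₂ • ((p₁ + p₂) + lam • A (k₁ + k₂) (p₁ + p₂)))
          - (σ₁₂ • p₁ + (σ₂ + σ₁₂) • p₂) = _
      module
    have hlamCA : lam * CA ≤ 1 / 48 := by
      have h' : lam ≤ 1 / (48 * CA) := le_of_lt hlam'
      calc lam * CA ≤ (1 / (48 * CA)) * CA := mul_le_mul_of_nonneg_right h' hCA.le
        _ = 1 / 48 := by field_simp
    have hpp : ‖p₁ + p₂‖ ≤ ‖p₁‖ + ‖p₂‖ := norm_add_le _ _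
    have hEb : ∀ (σ σ' : ℝ) (q q' : EuclideanSpace ℝ (Fin 3)) (x x' : EuclideanSpace ℝ (Fin 3)),
        |σ| = 1 → |σ'| = 1 →
        ‖lam • (σ • A q x + σ' • A q' x')‖ ≤ lam * (CA * ‖x‖ + CA * ‖x'‖) := by
      intro σ σ' q q' x x' hσ hσ'
      rw [norm_smul, Real.norm_eq_abs, abs_of_pos hlam]
      refine mul_le_mul_of_nonneg_left ?_ hlam.le
      calc ‖σ • A q x + σ' • A q' x'‖ ≤ ‖σ • A q x‖ + ‖σ' • A q' x'‖ := norm_add_le _ _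
        _ = ‖A q x‖ + ‖A q' x'‖ := by
            rw [norm_smul, norm_smul, Real.norm_eq_abs, Real.norm_eq_abs, hσ, hσ',
              one_mul, one_mul]
        _ ≤ CA * ‖x‖ + CA * ‖x'‖ := add_le_add (hAle _ _) (hAle _ _)
    have hE1S : ‖row1 - T1‖ ≤ S / 4 := by
      have hb : ‖row1 - T1‖ ≤ lam * (CA * ‖p₁‖ + CA * ‖p₁ + p₂‖) := by
        rw [hE1]; exact hEb σ₁ σ₁₂ k₁ (k₁ + k₂) p₁ (p₁ + p₂) habs₁ habs₁₂
      have h12 : CA * ‖p₁‖ + CA * ‖p₁ + p₂‖ ≤ CA * (12 * S) := by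
        have : ‖p₁‖ + ‖p₁ + p₂‖ ≤ 12 * S := by nlinarith [hp1, hp2, ht12, hpp]
        calc CA * ‖p₁‖ + CA * ‖p₁ + p₂‖ = CA * (‖p₁‖ + ‖p₁ + p₂‖) := by ring
          _ ≤ CA * (12 * S) := mul_le_mul_of_nonneg_left this hCA.le
      calc ‖row1 - T1‖ ≤ lam * (CA * ‖p₁‖ + CA * ‖p₁ + p₂‖) := hb
        _ ≤ lam * (CA * (12 * S)) := mul_le_mul_of_nonneg_left h12 hlam.le
        _ = (lam * CA) * (12 * S) := by ring
        _ ≤ (1 / 48) * (12 * S) := mul_le_mul_of_nonneg_right hlamCA (by positivity)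
        _ = S / 4 := by ring
    have hE2S : ‖row2 - T2‖ ≤ S / 4 := by
      have hb : ‖row2 - T2‖ ≤ lam * (CA * ‖p₂‖ + CA * ‖p₁ + p₂‖) := by
        rw [hE2]; exact hEb σ₂ σ₁₂ k₂ (k₁ + k₂) p₂ (p₁ + p₂) habs₂ habs₁₂
      have h12 : CA * ‖p₂‖ + CA * ‖p₁ + p₂‖ ≤ CA * (12 * S) := by
        have : ‖p₂‖ + ‖p₁ + p₂‖ ≤ 12 * S := by nlinarith [hp1, hp2, ht12, hpp]
        calc CA * ‖p₂‖ + CA * ‖p₁ + p₂‖ = CA * (‖p₂‖ + ‖p₁ + p₂‖) := by ring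
          _ ≤ CA * (12 * S) := mul_le_mul_of_nonneg_left this hCA.le
      calc ‖row2 - T2‖ ≤ lam * (CA * ‖p₂‖ + CA * ‖p₁ + p₂‖) := hb
        _ ≤ lam * (CA * (12 * S)) := mul_le_mul_of_nonneg_left h12 hlam.le
        _ = (lam * CA) * (12 * S) := by ring
        _ ≤ (1 / 48) * (12 * S) := mul_le_mul_of_nonneg_right hlamCA (by positivity)
        _ = S / 4 := by ring
    have hd1' : |r1 - t1| ≤ S / 4 := (abs_norm_sub_norm_le _ _).trans hE1S
    have hd2' : |r2 - t2| ≤ S / 4 := (abs_norm_sub_norm_le _ _).trans hE2S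
    obtain ⟨hd1a, hd1b⟩ := abs_le.mp hd1'
    obtain ⟨hd2a, hd2b⟩ := abs_le.mp hd2'
    have t1n : (0:ℝ) ≤ t1 := norm_nonneg _
    have t2n : (0:ℝ) ≤ t2 := norm_nonneg _
    have r1n : (0:ℝ) ≤ r1 := norm_nonneg _
    have r2n : (0:ℝ) ≤ r2 := norm_nonneg _
    have k1a : t1 ≤ r1 + S / 4 := by linarith
    have k2a : t2 ≤ r2 + S / 4 := by linarith
    have k1b : r1 ≤ t1 + S / 4 := by linarith
    have k2b : r2 ≤ t2 + S / 4 := by linarith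
    constructor
    · -- S/2 ≤ R
      have hsq : S ^ 2 ≤ R ^ 2 + S * R + S ^ 2 / 8 := by
        have a1 : t1 ^ 2 ≤ (r1 + S / 4) ^ 2 := pow_le_pow_left₀ t1n k1a 2
        have a2 : t2 ^ 2 ≤ (r2 + S / 4) ^ 2 := pow_le_pow_left₀ t2n k2a 2
        have a3 : S / 2 * (r1 + r2) ≤ S / 2 * (2 * R) :=
          mul_le_mul_of_nonneg_left hr12 (by linarith)
        nlinarith only [a1, a2, a3, hS2, hR2]
      nlinarith only [hsq, hS0, hR0, mul_nonneg hS0 hR0]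
    · -- R ≤ 3S/2
      have hsq : R ^ 2 ≤ 17 / 8 * S ^ 2 := by
        have a1 : r1 ^ 2 ≤ (t1 + S / 4) ^ 2 := pow_le_pow_left₀ r1n k1b 2
        have a2 : r2 ^ 2 ≤ (t2 + S / 4) ^ 2 := pow_le_pow_left₀ r2n k2b 2
        have a3 : S / 2 * (t1 + t2) ≤ S / 2 * (2 * S) :=
          mul_le_mul_of_nonneg_left ht12 (by linarith)
        nlinarith only [a1, a2, a3, hS2, hR2]
      nlinarith only [hsq, hS0, hR0, mul_nonneg hS0 hR0]
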